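/- arXiv:1302.4474 — 2 statements merged into one kernel-verified Lean document; each statement's English description precedes it below -/
import Mathlib

section
/- Let X1, X2, X3 be mutually independent random variables on a common probability space taking values in finite sets, each with entropy H(X1) = H(X2) = H(X3) = a, and let Y, Z be finite-valued random variables with H(Y) ≤ a and H(Z) ≤ a. If H((X1, X2) | (Y, Z)) ≤ ε for some ε ≥ 0, then a − ε ≤ H(X3 | (Y, Z)) ≤ a and H((Y, Z) | X3) ≥ 2a − 2ε. -/
open scoped BigOperators

/-- The probability that the random variable `X` (on finite sample space `Ω`
with probability mass function `μ`) takes the value `a`. -/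
noncomputable def probOf {Ω : Type} [Fintype Ω] {α : Type} [DecidableEq α]
    (μ : Ω → ℝ) (X : Ω → α) (a : α) : ℝ :=
  ∑ ω : Ω, if X ω = a then μ ω else 0

/-- Shannon entropy (natural-log base) of a finite-valued random variable. -/
noncomputable def entropy {Ω : Type} [Fintype Ω] {α : Type} [Fintype α] [DecidableEq α]
    (μ : Ω → ℝ) (X : Ω → α) : ℝ :=
  ∑ a : α, -(probOf μ X a * Real.log (probOf μ X a))

/-- Conditional entropy `H(X | Y) = H(X, Y) - H(Y)`. -/
noncomputable def condEntropy {Ω : Type} [Fintype Ω] {α β : Type}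
    [Fintype α] [DecidableEq α] [Fintype β] [DecidableEq β]
    (μ : Ω → ℝ) (X : Ω → α) (Y : Ω → β) : ℝ :=
  entropy μ (fun ω => (X ω, Y ω)) - entropy μ Y

/-- `μ` is a probability mass function on the finite sample space `Ω`. -/
def IsPMF {Ω : Type} [Fintype Ω] (μ : Ω → ℝ) : Prop :=
  (∀ ω, 0 ≤ μ ω) ∧ ∑ ω : Ω, μ ω = 1

/-- Independence of two finite-valued random variables: the joint distribution
factorizes. -/
def IndepRV {Ω : Type} [Fintype Ω] {α β : Type} [DecidableEq α] [DecidableEq β]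
    (μ : Ω → ℝ) (X : Ω → α) (Y : Ω → β) : Prop :=
  ∀ a b, probOf μ (fun ω => (X ω, Y ω)) (a, b) = probOf μ X a * probOf μ Y b

/-- Mutual independence of three finite-valued random variables: the joint
distribution factorizes. -/
def MutIndep3 {Ω : Type} [Fintype Ω] {α β γ : Type}
    [DecidableEq α] [DecidableEq β] [DecidableEq γ]
    (μ : Ω → ℝ) (X : Ω → α) (Y : Ω → β) (Z : Ω → γ) : Prop :=
  ∀ a b c, probOf μ (fun ω => (X ω, Y ω, Z ω)) (a, b, c) =
    probOf μ X a * probOf μ Y b * probOf μ Z c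

section Aux

variable {Ω : Type} [Fintype Ω] {μ : Ω → ℝ}

lemma probOf_nonneg (hμ : IsPMF μ) {α : Type} [DecidableEq α] (X : Ω → α) (a : α) :
    0 ≤ probOf μ X a :=
  Finset.sum_nonneg fun ω _ => by by_cases h : X ω = a <;> simp [h, hμ.1 ω]

lemma sum_probOf (hμ : IsPMF μ) {α : Type} [Fintype α] [DecidableEq α] (X : Ω → α) :
    ∑ a : α, probOf μ X a = 1 := by
  unfold probOf
  rw [Finset.sum_comm]
  simp [Finset.sum_ite_eq, hμ.2]

lemma probOf_fst {α β : Type} [DecidableEq α] [Fintype β] [DecidableEq β]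
    (X : Ω → α) (Y : Ω → β) (a : α) :
    ∑ b : β, probOf μ (fun ω => (X ω, Y ω)) (a, b) = probOf μ X a := by
  unfold probOf
  rw [Finset.sum_comm]
  refine Finset.sum_congr rfl fun ω _ => ?_
  by_cases h : X ω = a <;> simp [Prod.ext_iff, h, Finset.sum_ite_eq]

lemma probOf_snd {α β : Type} [Fintype α] [DecidableEq α] [DecidableEq β]
    (X : Ω → α) (Y : Ω → β) (b : β) :
    ∑ a : α, probOf μ (fun ω => (X ω, Y ω)) (a, b) = probOf μ Y b := by
  unfold probOf
  rw [Finset.sum_comm]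
  refine Finset.sum_congr rfl fun ω _ => ?_
  by_cases h : Y ω = b <;> simp [Prod.ext_iff, h, Finset.sum_ite_eq]

lemma probOf_pair12 {α β γ : Type} [DecidableEq α] [DecidableEq β] [Fintype γ] [DecidableEq γ]
    (A : Ω → α) (B : Ω → β) (C : Ω → γ) (a : α) (b : β) :
    ∑ c : γ, probOf μ (fun ω => (A ω, B ω, C ω)) (a, b, c)
      = probOf μ (fun ω => (A ω, B ω)) (a, b) := by
  unfold probOf
  rw [Finset.sum_comm]
  refine Finset.sum_congr rfl fun ω _ => ?_
  by_cases hA : A ω = a <;> by_cases hB : B ω = b <;>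
    simp [Prod.ext_iff, hA, hB, Finset.sum_ite_eq]

lemma probOf_pair_le_fst (hμ : IsPMF μ) {α β : Type} [Fintype α] [DecidableEq α]
    [Fintype β] [DecidableEq β] (X : Ω → α) (Y : Ω → β) (a : α) (b : β) :
    probOf μ (fun ω => (X ω, Y ω)) (a, b) ≤ probOf μ X a := by
  rw [← probOf_fst X Y a]
  exact Finset.single_le_sum (fun b' _ => probOf_nonneg hμ (fun ω => (X ω, Y ω)) (a, b'))
    (Finset.mem_univ b)

lemma probOf_pair_le_snd (hμ : IsPMF μ) {α β : Type} [Fintype α] [DecidableEq α]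
    [Fintype β] [DecidableEq β] (X : Ω → α) (Y : Ω → β) (a : α) (b : β) :
    probOf μ (fun ω => (X ω, Y ω)) (a, b) ≤ probOf μ Y b := by
  rw [← probOf_snd X Y b]
  exact Finset.single_le_sum (fun a' _ => probOf_nonneg hμ (fun ω => (X ω, Y ω)) (a', b))
    (Finset.mem_univ a)

lemma probOf_le_one (hμ : IsPMF μ) {α : Type} [Fintype α] [DecidableEq α]
    (X : Ω → α) (a : α) : probOf μ X a ≤ 1 := by
  rw [← sum_probOf hμ X]
  exact Finset.single_le_sum (fun a' _ => probOf_nonneg hμ X a') (Finset.mem_univ a)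

lemma entropy_eq_neg {α : Type} [Fintype α] [DecidableEq α] (X : Ω → α) :
    entropy μ X = -∑ a : α, probOf μ X a * Real.log (probOf μ X a) := by
  simp [entropy]

lemma entropy_nonneg (hμ : IsPMF μ) {α : Type} [Fintype α] [DecidableEq α] (X : Ω → α) :
    0 ≤ entropy μ X := by
  refine Finset.sum_nonneg fun a _ => ?_
  have h0 := probOf_nonneg hμ X a
  have h1 := probOf_le_one hμ X a
  nlinarith [Real.log_nonpos h0 h1]

lemma gibbs {ι : Type} [Fintype ι] (p q : ι → ℝ)
    (hp : ∀ i, 0 ≤ p i) (hq : ∀ i, 0 ≤ q i)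
    (hpq : ∀ i, p i ≠ 0 → q i ≠ 0)
    (hq1 : ∑ i : ι, q i ≤ 1) (hp1 : ∑ i : ι, p i = 1) :
    ∑ i : ι, p i * Real.log (q i) ≤ ∑ i : ι, p i * Real.log (p i) := by
  have key : ∀ i, p i * Real.log (q i) - p i * Real.log (p i) ≤ q i - p i := by
    intro i
    rcases eq_or_lt_of_le (hp i) with h | h
    · rw [← h]; simpa using hq i
    · have hqi : 0 < q i := lt_of_le_of_ne (hq i) (Ne.symm (hpq i (ne_of_gt h)))
      have hlog := Real.log_le_sub_one_of_pos (div_pos hqi h)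
      rw [Real.log_div (ne_of_gt hqi) (ne_of_gt h)] at hlog
      have h2 : p i * (q i / p i - 1) = q i - p i := by field_simp
      nlinarith [mul_le_mul_of_nonneg_left hlog (le_of_lt h)]
  have h1 : ∑ i : ι, (p i * Real.log (q i) - p i * Real.log (p i)) ≤ ∑ i : ι, (q i - p i) :=
    Finset.sum_le_sum fun i _ => key i
  rw [Finset.sum_sub_distrib, Finset.sum_sub_distrib, hp1] at h1
  linarith

lemma sum_pair_mul_fst {α β : Type} [Fintype α] [DecidableEq α] [Fintype β] [DecidableEq β]
    (X : Ω → α) (Y : Ω → β) (F : α → ℝ) :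
    ∑ x : α × β, probOf μ (fun ω => (X ω, Y ω)) x * F x.1
      = ∑ a : α, probOf μ X a * F a := by
  rw [Fintype.sum_prod_type]
  refine Finset.sum_congr rfl fun a _ => ?_
  dsimp only
  rw [← Finset.sum_mul, probOf_fst]

lemma sum_pair_mul_snd {α β : Type} [Fintype α] [DecidableEq α] [Fintype β] [DecidableEq β]
    (X : Ω → α) (Y : Ω → β) (F : β → ℝ) :
    ∑ x : α × β, probOf μ (fun ω => (X ω, Y ω)) x * F x.2
      = ∑ b : β, probOf μ Y b * F b := by
  rw [Fintype.sum_prod_type, Finset.sum_comm]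
  refine Finset.sum_congr rfl fun b _ => ?_
  dsimp only
  rw [← Finset.sum_mul, probOf_snd]

end Aux

section Aux2

variable {Ω : Type} [Fintype Ω] {μ : Ω → ℝ}

lemma probOf_comp {α α' : Type} [Fintype α] [DecidableEq α] [DecidableEq α']
    (X : Ω → α) (g : α → α') (b : α') :
    probOf μ (fun ω => g (X ω)) b
      = ∑ a ∈ Finset.univ.filter (fun a => g a = b), probOf μ X a := by
  unfold probOf
  rw [Finset.sum_comm]
  refine Finset.sum_congr rfl fun ω _ => ?_
  rw [Finset.sum_ite_eq (Finset.univ.filter fun a => g a = b) (X ω)]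
  simp

lemma entropy_comp_le (hμ : IsPMF μ) {α α' : Type} [Fintype α] [DecidableEq α]
    [Fintype α'] [DecidableEq α'] (X : Ω → α) (g : α → α') :
    entropy μ (fun ω => g (X ω)) ≤ entropy μ X := by
  set q : α' → ℝ := probOf μ (fun ω => g (X ω)) with hqdef
  set p : α → ℝ := probOf μ X with hpdef
  have hple : ∀ a, p a ≤ q (g a) := by
    intro a
    rw [hqdef, probOf_comp]
    exact Finset.single_le_sum (fun a' _ => probOf_nonneg hμ X a')
      (by simp)
  have step2 : ∑ a : α, p a * Real.log (p a) ≤ ∑ a : α, p a * Real.log (q (g a)) := by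
    refine Finset.sum_le_sum fun a _ => ?_
    rcases eq_or_lt_of_le (probOf_nonneg hμ X a) with h | h
    · have hp0 : p a = 0 := by rw [hpdef, ← h]
      simp [hp0]
    · exact mul_le_mul_of_nonneg_left
        (Real.log_le_log h (hple a)) (le_of_lt h)
  have step3 : ∑ a : α, p a * Real.log (q (g a)) = ∑ b : α', q b * Real.log (q b) := by
    rw [← Finset.sum_fiberwise_of_maps_to (g := g) (fun a _ => Finset.mem_univ (g a))
      (fun a => p a * Real.log (q (g a)))]
    refine Finset.sum_congr rfl fun b _ => ?_
    have hsame : ∀ a ∈ Finset.univ.filter (fun a => g a = b),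
        p a * Real.log (q (g a)) = p a * Real.log (q b) := fun a ha => by
      rw [(Finset.mem_filter.mp ha).2]
    rw [Finset.sum_congr rfl hsame, ← Finset.sum_mul]
    congr 1
    simp only [hpdef, hqdef]
    exact (probOf_comp X g b).symm
  rw [entropy_eq_neg, entropy_eq_neg]
  have := step2.trans (le_of_eq step3)
  linarith

lemma entropy_comp_inj {α α' : Type} [Fintype α] [DecidableEq α]
    [Fintype α'] [DecidableEq α'] (X : Ω → α) (g : α → α')
    (hg : Function.Injective g) :
    entropy μ (fun ω => g (X ω)) = entropy μ X := by
  have hq0 : ∀ b ∉ Finset.univ.image g, probOf μ (fun ω => g (X ω)) b = 0 := by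
    intro b hb
    rw [probOf_comp]
    refine Finset.sum_eq_zero fun a ha => ?_
    exact absurd (Finset.mem_image.mpr ⟨a, Finset.mem_univ a, (Finset.mem_filter.mp ha).2⟩)
      hb
  have hqg : ∀ a, probOf μ (fun ω => g (X ω)) (g a) = probOf μ X a := by
    intro a
    rw [probOf_comp]
    rw [show Finset.univ.filter (fun a' => g a' = g a) = {a} by
      ext a'; simp [hg.eq_iff]]
    simp
  unfold entropy
  rw [← Finset.sum_subset (Finset.subset_univ (Finset.univ.image g))
    (fun b _ hb => by rw [hq0 b hb]; simp)]
  rw [Finset.sum_image (fun a _ a' _ h => hg h)]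
  exact Finset.sum_congr rfl fun a _ => by rw [hqg]

lemma entropy_pair_le (hμ : IsPMF μ) {α β : Type} [Fintype α] [DecidableEq α]
    [Fintype β] [DecidableEq β] (X : Ω → α) (Y : Ω → β) :
    entropy μ (fun ω => (X ω, Y ω)) ≤ entropy μ X + entropy μ Y := by
  set p : α × β → ℝ := probOf μ (fun ω => (X ω, Y ω)) with hpdef
  set q : α × β → ℝ := fun x => probOf μ X x.1 * probOf μ Y x.2 with hqdef
  have hkey : ∑ x : α × β, p x * Real.log (q x) ≤ ∑ x : α × β, p x * Real.log (p x) := by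
    refine gibbs p q (fun x => probOf_nonneg hμ _ x)
      (fun x => mul_nonneg (probOf_nonneg hμ X _) (probOf_nonneg hμ Y _)) ?_ ?_ ?_
    · rintro ⟨a, b⟩ hne
      have h1 : 0 < p (a, b) := lt_of_le_of_ne (probOf_nonneg hμ _ _) (Ne.symm hne)
      have h2 := probOf_pair_le_fst hμ X Y a b
      have h3 := probOf_pair_le_snd hμ X Y a b
      rw [hpdef] at h1
      exact ne_of_gt (mul_pos (lt_of_lt_of_le h1 h2) (lt_of_lt_of_le h1 h3))
    · rw [Fintype.sum_prod_type]
      have : ∀ a : α, ∑ b : β, q (a, b) = probOf μ X a := by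
        intro a
        rw [hqdef]
        dsimp only
        rw [← Finset.mul_sum, sum_probOf hμ Y, mul_one]
      rw [Finset.sum_congr rfl fun a _ => this a, sum_probOf hμ X]
    · exact sum_probOf hμ _
  have hsplit : ∑ x : α × β, p x * Real.log (q x)
      = ∑ x : α × β, p x * Real.log (probOf μ X x.1)
        + ∑ x : α × β, p x * Real.log (probOf μ Y x.2) := by
    rw [← Finset.sum_add_distrib]
    refine Finset.sum_congr rfl fun x _ => ?_
    rcases eq_or_lt_of_le (probOf_nonneg hμ (fun ω => (X ω, Y ω)) x) with h | h
    · rw [hpdef, ← h]; ring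
    · have h2 : 0 < probOf μ X x.1 :=
        lt_of_lt_of_le h (probOf_pair_le_fst hμ X Y x.1 x.2)
      have h3 : 0 < probOf μ Y x.2 :=
        lt_of_lt_of_le h (probOf_pair_le_snd hμ X Y x.1 x.2)
      rw [hqdef]
      dsimp only
      rw [Real.log_mul (ne_of_gt h2) (ne_of_gt h3)]
      ring
  rw [sum_pair_mul_fst X Y (fun a => Real.log (probOf μ X a)),
    sum_pair_mul_snd X Y (fun b => Real.log (probOf μ Y b))] at hsplit
  rw [entropy_eq_neg, entropy_eq_neg, entropy_eq_neg]
  rw [hsplit] at hkey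
  linarith

lemma entropy_pair_of_indep (hμ : IsPMF μ) {α β : Type} [Fintype α] [DecidableEq α]
    [Fintype β] [DecidableEq β] (X : Ω → α) (Y : Ω → β) (h : IndepRV μ X Y) :
    entropy μ (fun ω => (X ω, Y ω)) = entropy μ X + entropy μ Y := by
  have hmul : ∀ (x y : ℝ), 0 ≤ x → 0 ≤ y →
      (x * y) * Real.log (x * y) = y * (x * Real.log x) + x * (y * Real.log y) := by
    intro x y hx hy
    rcases eq_or_lt_of_le hx with h | h
    · rw [← h]; simp
    · rcases eq_or_lt_of_le hy with h' | h'
      · rw [← h']; simp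
      · rw [Real.log_mul (ne_of_gt h) (ne_of_gt h')]; ring
  rw [entropy_eq_neg, entropy_eq_neg, entropy_eq_neg, Fintype.sum_prod_type]
  have : ∀ a : α, ∑ b : β,
      probOf μ (fun ω => (X ω, Y ω)) (a, b) * Real.log (probOf μ (fun ω => (X ω, Y ω)) (a, b))
      = probOf μ X a * Real.log (probOf μ X a)
        + probOf μ X a * ∑ b : β, probOf μ Y b * Real.log (probOf μ Y b) := by
    intro a
    have : ∀ b : β, probOf μ (fun ω => (X ω, Y ω)) (a, b)
        * Real.log (probOf μ (fun ω => (X ω, Y ω)) (a, b))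
        = probOf μ Y b * (probOf μ X a * Real.log (probOf μ X a))
          + probOf μ X a * (probOf μ Y b * Real.log (probOf μ Y b)) := by
      intro b
      rw [h a b]
      exact hmul _ _ (probOf_nonneg hμ X a) (probOf_nonneg hμ Y b)
    rw [Finset.sum_congr rfl fun b _ => this b, Finset.sum_add_distrib,
      ← Finset.sum_mul, ← Finset.mul_sum, sum_probOf hμ Y, one_mul]
  rw [Finset.sum_congr rfl fun a _ => this a, Finset.sum_add_distrib,
    ← Finset.sum_mul]
  rw [sum_probOf hμ X]
  ring

end Aux2

section Aux3

variable {Ω : Type} [Fintype Ω] {μ : Ω → ℝ}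

lemma entropy_submod (hμ : IsPMF μ) {α β γ : Type} [Fintype α] [DecidableEq α]
    [Fintype β] [DecidableEq β] [Fintype γ] [DecidableEq γ]
    (A : Ω → α) (B : Ω → β) (C : Ω → γ) :
    entropy μ B + entropy μ (fun ω => (A ω, B ω, C ω))
      ≤ entropy μ (fun ω => (A ω, B ω)) + entropy μ (fun ω => (B ω, C ω)) := by
  set p : α × β × γ → ℝ := probOf μ (fun ω => (A ω, B ω, C ω)) with hpdef
  set pab : α × β → ℝ := probOf μ (fun ω => (A ω, B ω)) with habdef
  set pbc : β × γ → ℝ := probOf μ (fun ω => (B ω, C ω)) with hbcdef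
  set pb : β → ℝ := probOf μ B with hbdef
  set q : α × β × γ → ℝ := fun x => pab (x.1, x.2.1) * pbc x.2 / pb x.2.1 with hqdef
  have expand : ∀ F : α × β × γ → ℝ, ∑ x : α × β × γ, F x
      = ∑ a : α, ∑ b : β, ∑ c : γ, F (a, b, c) := by
    intro F
    rw [Fintype.sum_prod_type]
    exact Finset.sum_congr rfl fun a _ => Fintype.sum_prod_type _
  have f1 : ∀ a b, ∑ c : γ, p (a, b, c) = pab (a, b) := fun a b =>
    probOf_pair12 A B C a b
  have f2 : ∀ b c, ∑ a : α, p (a, b, c) = pbc (b, c) := fun b c =>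
    probOf_snd A (fun ω => (B ω, C ω)) (b, c)
  have f3 : ∀ b, ∑ a : α, pab (a, b) = pb b := fun b => probOf_snd A B b
  have f4 : ∀ b, ∑ c : γ, pbc (b, c) = pb b := fun b => probOf_fst B C b
  have hp0 : ∀ x, 0 ≤ p x := fun x => probOf_nonneg hμ _ x
  have hab0 : ∀ y, 0 ≤ pab y := fun y => probOf_nonneg hμ _ y
  have hbc0 : ∀ y, 0 ≤ pbc y := fun y => probOf_nonneg hμ _ y
  have hb0 : ∀ b, 0 ≤ pb b := fun b => probOf_nonneg hμ _ b
  have ple_ab : ∀ a b c, p (a, b, c) ≤ pab (a, b) := fun a b c => by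
    rw [← f1 a b]
    exact Finset.single_le_sum (fun c' _ => hp0 (a, b, c')) (Finset.mem_univ c)
  have ple_bc : ∀ a b c, p (a, b, c) ≤ pbc (b, c) := fun a b c => by
    rw [← f2 b c]
    exact Finset.single_le_sum (fun a' _ => hp0 (a', b, c)) (Finset.mem_univ a)
  have pab_le_pb : ∀ a b, pab (a, b) ≤ pb b := fun a b => by
    rw [← f3 b]
    exact Finset.single_le_sum (fun a' _ => hab0 (a', b)) (Finset.mem_univ a)
  -- Gibbs
  have hkey : ∑ x : α × β × γ, p x * Real.log (q x)
      ≤ ∑ x : α × β × γ, p x * Real.log (p x) := by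
    refine gibbs p q hp0 ?_ ?_ ?_ (sum_probOf hμ _)
    · intro x
      exact div_nonneg (mul_nonneg (hab0 _) (hbc0 _)) (hb0 _)
    · rintro ⟨a, b, c⟩ hne
      have h1 : 0 < p (a, b, c) := lt_of_le_of_ne (hp0 _) (Ne.symm hne)
      have h2 : 0 < pab (a, b) := lt_of_lt_of_le h1 (ple_ab a b c)
      have h3 : 0 < pbc (b, c) := lt_of_lt_of_le h1 (ple_bc a b c)
      have h4 : 0 < pb b := lt_of_lt_of_le h2 (pab_le_pb a b)
      have : 0 < q (a, b, c) := by
        rw [hqdef]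
        exact div_pos (mul_pos h2 h3) h4
      exact ne_of_gt this
    · rw [expand q, Finset.sum_comm]
      have hb_bound : ∀ b : β, ∑ a : α, ∑ c : γ, q (a, b, c) ≤ pb b := by
        intro b
        by_cases hb : pb b = 0
        · have hab : ∀ a, pab (a, b) = 0 := fun a =>
            le_antisymm (hb ▸ pab_le_pb a b) (hab0 (a, b))
          have hz : ∀ a c, q (a, b, c) = 0 := by
            intro a c
            rw [hqdef]
            dsimp only
            rw [hab a]
            simp
          rw [Finset.sum_congr rfl fun a _ => Finset.sum_congr rfl fun c _ => hz a c]
          simp [hb0 b]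
        · have inner : ∀ a, ∑ c : γ, q (a, b, c) = pab (a, b) := by
            intro a
            have hq' : ∀ c, q (a, b, c) = pab (a, b) * (pbc (b, c) / pb b) := by
              intro c
              rw [hqdef]
              dsimp only
              rw [mul_div_assoc]
            rw [Finset.sum_congr rfl fun c _ => hq' c, ← Finset.mul_sum,
              ← Finset.sum_div, f4 b, div_self hb, mul_one]
          rw [Finset.sum_congr rfl fun a _ => inner a, f3 b]
      calc ∑ b : β, ∑ a : α, ∑ c : γ, q (a, b, c) ≤ ∑ b : β, pb b :=
            Finset.sum_le_sum fun b _ => hb_bound b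
        _ = 1 := sum_probOf hμ B
  -- split the log of q
  have hsplit : ∑ x : α × β × γ, p x * Real.log (q x)
      = ∑ x : α × β × γ, p x * Real.log (pab (x.1, x.2.1))
        + ∑ x : α × β × γ, p x * Real.log (pbc x.2)
        - ∑ x : α × β × γ, p x * Real.log (pb x.2.1) := by
    rw [← Finset.sum_add_distrib, ← Finset.sum_sub_distrib]
    refine Finset.sum_congr rfl fun x _ => ?_
    obtain ⟨a, b, c⟩ := x
    rcases eq_or_lt_of_le (hp0 (a, b, c)) with h | h
    · rw [← h]; ring
    · have h2 : 0 < pab (a, b) := lt_of_lt_of_le h (ple_ab a b c)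
      have h3 : 0 < pbc (b, c) := lt_of_lt_of_le h (ple_bc a b c)
      have h4 : 0 < pb b := lt_of_lt_of_le h2 (pab_le_pb a b)
      rw [hqdef]
      dsimp only
      rw [Real.log_div (ne_of_gt (mul_pos h2 h3)) (ne_of_gt h4),
        Real.log_mul (ne_of_gt h2) (ne_of_gt h3)]
      ring
  -- grouping
  have G1 : ∑ x : α × β × γ, p x * Real.log (pab (x.1, x.2.1))
      = ∑ y : α × β, pab y * Real.log (pab y) := by
    rw [expand, Fintype.sum_prod_type (f := fun y : α × β => pab y * Real.log (pab y))]
    refine Finset.sum_congr rfl fun a _ => ?_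
    refine Finset.sum_congr rfl fun b _ => ?_
    dsimp only
    rw [← Finset.sum_mul, f1 a b]
  have G2 : ∑ x : α × β × γ, p x * Real.log (pbc x.2)
      = ∑ y : β × γ, pbc y * Real.log (pbc y) := by
    rw [expand, Fintype.sum_prod_type (f := fun y : β × γ => pbc y * Real.log (pbc y))]
    rw [Finset.sum_comm]
    refine Finset.sum_congr rfl fun b _ => ?_
    rw [Finset.sum_comm]
    refine Finset.sum_congr rfl fun c _ => ?_
    dsimp only
    rw [← Finset.sum_mul, f2 b c]
  have G3 : ∑ x : α × β × γ, p x * Real.log (pb x.2.1)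
      = ∑ b : β, pb b * Real.log (pb b) := by
    rw [expand, Finset.sum_comm]
    refine Finset.sum_congr rfl fun b _ => ?_
    have inner : ∀ a, ∑ c : γ, p (a, b, c) * Real.log (pb b)
        = pab (a, b) * Real.log (pb b) := by
      intro a
      rw [← Finset.sum_mul, f1 a b]
    rw [Finset.sum_congr rfl fun a _ => inner a, ← Finset.sum_mul, f3 b]
  rw [hsplit, G1, G2, G3] at hkey
  rw [entropy_eq_neg, entropy_eq_neg, entropy_eq_neg, entropy_eq_neg]
  rw [hpdef] at hkey
  linarith

end Aux3

/-- If `X1, X2, X3` are mutually independent, each with entropy `a`,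
`H(Y) ≤ a`, `H(Z) ≤ a` and `H((X1,X2) | (Y,Z)) ≤ ε` with `ε ≥ 0`, then
`a - ε ≤ H(X3 | (Y,Z)) ≤ a` and `H((Y,Z) | X3) ≥ 2a - 2ε`. -/
theorem stmt2 {Ω α₁ α₂ α₃ β γ : Type} [Fintype Ω]
    [Fintype α₁] [DecidableEq α₁] [Fintype α₂] [DecidableEq α₂]
    [Fintype α₃] [DecidableEq α₃] [Fintype β] [DecidableEq β]
    [Fintype γ] [DecidableEq γ]
    (μ : Ω → ℝ) (hμ : IsPMF μ)
    (X1 : Ω → α₁) (X2 : Ω → α₂) (X3 : Ω → α₃) (Y : Ω → β) (Z : Ω → γ)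
    (a ε : ℝ) (hε : 0 ≤ ε)
    (hindep : MutIndep3 μ X1 X2 X3)
    (hX1 : entropy μ X1 = a) (hX2 : entropy μ X2 = a) (hX3 : entropy μ X3 = a)
    (hY : entropy μ Y ≤ a) (hZ : entropy μ Z ≤ a)
    (hcond : condEntropy μ (fun ω => (X1 ω, X2 ω)) (fun ω => (Y ω, Z ω)) ≤ ε) :
    (a - ε ≤ condEntropy μ X3 (fun ω => (Y ω, Z ω)) ∧
      condEntropy μ X3 (fun ω => (Y ω, Z ω)) ≤ a) ∧
    2 * a - 2 * ε ≤ condEntropy μ (fun ω => (Y ω, Z ω)) X3 := by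
  -- pairwise and grouped independence
  have hIndep12 : IndepRV μ X1 X2 := by
    intro x1 x2
    rw [← probOf_pair12 X1 X2 X3 x1 x2]
    rw [Finset.sum_congr rfl fun c _ => hindep x1 x2 c]
    rw [← Finset.mul_sum, sum_probOf hμ X3, mul_one]
  have hIndep23 : IndepRV μ X2 X3 := by
    intro x2 x3
    have hmarg : ∑ x1 : α₁, probOf μ (fun ω => (X1 ω, X2 ω, X3 ω)) (x1, x2, x3)
        = probOf μ (fun ω => (X2 ω, X3 ω)) (x2, x3) :=
      probOf_snd X1 (fun ω => (X2 ω, X3 ω)) (x2, x3)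
    rw [← hmarg, Finset.sum_congr rfl fun x1 _ => hindep x1 x2 x3]
    rw [show (fun x1 => probOf μ X1 x1 * probOf μ X2 x2 * probOf μ X3 x3)
        = fun x1 => probOf μ X1 x1 * (probOf μ X2 x2 * probOf μ X3 x3) from
      funext fun x1 => by ring]
    rw [← Finset.sum_mul, sum_probOf hμ X1, one_mul]
  have hIndep1_23 : IndepRV μ X1 (fun ω => (X2 ω, X3 ω)) := by
    rintro x1 ⟨x2, x3⟩
    have h1 : probOf μ (fun ω => (X1 ω, (X2 ω, X3 ω))) (x1, (x2, x3))
        = probOf μ X1 x1 * probOf μ X2 x2 * probOf μ X3 x3 := hindep x1 x2 x3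
    rw [h1, hIndep23 x2 x3, mul_assoc]
  -- entropy values
  have HU : entropy μ (fun ω => (X1 ω, X2 ω)) = a + a := by
    rw [entropy_pair_of_indep hμ X1 X2 hIndep12, hX1, hX2]
  have H23 : entropy μ (fun ω => (X2 ω, X3 ω)) = a + a := by
    rw [entropy_pair_of_indep hμ X2 X3 hIndep23, hX2, hX3]
  have H123 : entropy μ (fun ω => (X1 ω, X2 ω, X3 ω)) = a + (a + a) := by
    have e : entropy μ (fun ω => (X1 ω, X2 ω, X3 ω))
        = entropy μ X1 + entropy μ (fun ω => (X2 ω, X3 ω)) :=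
      entropy_pair_of_indep hμ X1 (fun ω => (X2 ω, X3 ω)) hIndep1_23
    rw [e, hX1, H23]
  -- bounds on H(W) where W = (Y, Z)
  have HW_le : entropy μ (fun ω => (Y ω, Z ω)) ≤ a + a :=
    (entropy_pair_le hμ Y Z).trans (by linarith)
  have hUW : entropy μ (fun ω => ((X1 ω, X2 ω), (Y ω, Z ω)))
      - entropy μ (fun ω => (Y ω, Z ω)) ≤ ε := hcond
  have hUW_ge : entropy μ (fun ω => (X1 ω, X2 ω))
      ≤ entropy μ (fun ω => ((X1 ω, X2 ω), (Y ω, Z ω))) :=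
    entropy_comp_le hμ (fun ω => ((X1 ω, X2 ω), (Y ω, Z ω))) Prod.fst
  have HW_ge : a + a - ε ≤ entropy μ (fun ω => (Y ω, Z ω)) := by linarith
  -- subadditivity for (X3, W)
  have hX3W_le : entropy μ (fun ω => (X3 ω, (Y ω, Z ω)))
      ≤ entropy μ X3 + entropy μ (fun ω => (Y ω, Z ω)) :=
    entropy_pair_le hμ X3 (fun ω => (Y ω, Z ω))
  -- submodularity with A = X3, B = W, C = U
  have hsub : entropy μ (fun ω => (Y ω, Z ω))
      + entropy μ (fun ω => (X3 ω, (Y ω, Z ω), (X1 ω, X2 ω)))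
      ≤ entropy μ (fun ω => (X3 ω, (Y ω, Z ω)))
      + entropy μ (fun ω => ((Y ω, Z ω), (X1 ω, X2 ω))) :=
    entropy_submod hμ X3 (fun ω => (Y ω, Z ω)) (fun ω => (X1 ω, X2 ω))
  have hswap1 : entropy μ (fun ω => ((Y ω, Z ω), (X1 ω, X2 ω)))
      = entropy μ (fun ω => ((X1 ω, X2 ω), (Y ω, Z ω))) :=
    entropy_comp_inj (fun ω => ((X1 ω, X2 ω), (Y ω, Z ω))) Prod.swap Prod.swap_injective
  have htriple_ge : entropy μ (fun ω => (X1 ω, X2 ω, X3 ω))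
      ≤ entropy μ (fun ω => (X3 ω, (Y ω, Z ω), (X1 ω, X2 ω))) :=
    entropy_comp_le hμ (fun ω => (X3 ω, (Y ω, Z ω), (X1 ω, X2 ω)))
      (fun x => (x.2.2.1, x.2.2.2, x.1))
  have hswap2 : entropy μ (fun ω => ((Y ω, Z ω), X3 ω))
      = entropy μ (fun ω => (X3 ω, (Y ω, Z ω))) :=
    entropy_comp_inj (fun ω => (X3 ω, (Y ω, Z ω))) Prod.swap Prod.swap_injective
  refine ⟨⟨?_, ?_⟩, ?_⟩
  · show a - ε ≤ entropy μ (fun ω => (X3 ω, (Y ω, Z ω)))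
      - entropy μ (fun ω => (Y ω, Z ω))
    linarith
  · show entropy μ (fun ω => (X3 ω, (Y ω, Z ω)))
      - entropy μ (fun ω => (Y ω, Z ω)) ≤ a
    linarith
  · show 2 * a - 2 * ε ≤ entropy μ (fun ω => ((Y ω, Z ω), X3 ω)) - entropy μ X3
    linarith
end

section
/- Let G be a finite directed acyclic multigraph, let P be a directed path from s1 to t1 and Q a directed path from s2 to t2, and suppose P and Q share at least one edge. Then the overlap segment of P and Q whose edges occur last along P (i.e., closest to t1 in the order of edges of P) is equal to the overlap segment of P and Q whose edges occur last along Q (i.e., closest to t2 in the order of edges of Q). -/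
/-- A finite directed multigraph: finite vertex and edge sets together with
`tail`/`head` incidence maps. -/
structure Multigraph where
  V : Type
  E : Type
  fintypeV : Fintype V
  fintypeE : Fintype E
  tail : E → V
  head : E → V

namespace Multigraph

/-- Consecutive edges of the list are incident (head of one is tail of the next). -/
def Chain (G : Multigraph) (p : List G.E) : Prop :=
  List.Chain' (fun e f => G.head e = G.tail f) p

/-- `p` is a directed path from `u` to `v`: a nonempty list of consecutively
incident edges starting at `u`, ending at `v`, and visiting no vertex more than
once (the visited vertices are the tails of the edges together with `v`). -/
def IsPath (G : Multigraph) (u v : G.V) (p : List G.E) : Prop :=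
  p ≠ [] ∧ G.Chain p ∧
  p.head?.map G.tail = some u ∧
  p.getLast?.map G.head = some v ∧
  (p.map G.tail ++ [v]).Nodup

/-- `G` is acyclic: no nonempty chain of consecutively incident edges returns to
its starting vertex. -/
def Acyclic (G : Multigraph) : Prop :=
  ∀ p : List G.E, p ≠ [] → G.Chain p →
    p.getLast?.map G.head ≠ p.head?.map G.tail

/-- `e` is an overlap edge for the paths `P` and `Q` if it lies on both. -/
def OverlapEdge (G : Multigraph) (P Q : List G.E) (e : G.E) : Prop :=
  e ∈ P ∧ e ∈ Q

/-- `s` is an overlap segment for the paths `P` and `Q`: it forms a path (from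
some `u` to some `v`), all of its edges are overlap edges for `P` and `Q`, no
incoming edge of its first vertex is an overlap edge, and no outgoing edge of
its last vertex is an overlap edge. -/
def IsOverlapSegment (G : Multigraph) (P Q s : List G.E) : Prop :=
  ∃ u v : G.V, G.IsPath u v s ∧
    (∀ e ∈ s, G.OverlapEdge P Q e) ∧
    (∀ e : G.E, G.head e = u → ¬ G.OverlapEdge P Q e) ∧
    (∀ e : G.E, G.tail e = v → ¬ G.OverlapEdge P Q e)

/-- All edges of `s` occur strictly before all edges of `s'` along the list of
edges `P`. -/
def OccursBefore (G : Multigraph) (P s s' : List G.E) : Prop :=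
  ∀ e ∈ s, ∀ e' ∈ s', ∀ i j : ℕ, P[i]? = some e → P[j]? = some e' → i < j

/-- `S` is the overlap segment of `P` and `Q` whose edges occur last along the
reference path `R` (every other overlap segment occurs strictly before it). -/
def IsLastOverlapSegment (G : Multigraph) (P Q R S : List G.E) : Prop :=
  G.IsOverlapSegment P Q S ∧
  ∀ s : List G.E, G.IsOverlapSegment P Q s → s ≠ S → G.OccursBefore R s S

end Multigraph


namespace Multigraph

lemma seg_aux (G : Multigraph) {P : List G.E} (hc : G.Chain P) {i j : ℕ}
    (hij : i < j) (hj : j < P.length) :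
    ∃ C : List G.E, C ≠ [] ∧ G.Chain C ∧
      C.head?.map G.tail = some (G.head (P[i]'(by omega))) ∧
      C.getLast?.map G.head = some (G.head (P[j]'hj)) := by
  have hlen : ((P.drop (i+1)).take (j-i)).length = j - i := by
    simp [List.length_take, List.length_drop]; omega
  refine ⟨(P.drop (i+1)).take (j-i), ?_, (hc.drop (i+1)).take _, ?_, ?_⟩
  · intro h; rw [h] at hlen; simp at hlen; omega
  · have h0 : ((P.drop (i+1)).take (j-i))[0]'(by omega) = P[i+1]'(by omega) := by
      rw [List.getElem_take, List.getElem_drop]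
    rw [List.head?_eq_getElem?, List.getElem?_eq_getElem (by omega), h0]
    have := List.isChain_iff_getElem.mp hc i (by omega)
    simp [this]
  · have h0 : ((P.drop (i+1)).take (j-i))[j-i-1]'(by omega) = P[j]'hj := by
      rw [List.getElem_take, List.getElem_drop]
      congr 1; omega
    rw [List.getLast?_eq_getElem?, hlen, List.getElem?_eq_getElem (by omega), h0]
    simp

end Multigraph

/-- In a finite directed acyclic multigraph, if the path `P` from
`s1` to `t1` and the path `Q` from `s2` to `t2` share at least one edge, then
the overlap segment of `P` and `Q` occurring last along `P` coincides with the
overlap segment of `P` and `Q` occurring last along `Q`. -/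
theorem stmt12 (G : Multigraph) (hG : G.Acyclic)
    (s1 t1 s2 t2 : G.V) (P Q : List G.E)
    (hP : G.IsPath s1 t1 P) (hQ : G.IsPath s2 t2 Q)
    (hshare : ∃ e : G.E, e ∈ P ∧ e ∈ Q)
    (S1 S2 : List G.E)
    (h1 : G.IsLastOverlapSegment P Q P S1)
    (h2 : G.IsLastOverlapSegment P Q Q S2) :
    S1 = S2 := by
  by_contra hne
  obtain ⟨u1, v1, hpath1, hov1, -, -⟩ := h1.1
  obtain ⟨u2, v2, hpath2, hov2, -, -⟩ := h2.1
  obtain ⟨e1, he1⟩ := List.exists_mem_of_ne_nil _ hpath1.1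
  obtain ⟨e2, he2⟩ := List.exists_mem_of_ne_nil _ hpath2.1
  obtain ⟨i, hilt, hiP⟩ := List.mem_iff_getElem.mp (hov2 e2 he2).1
  obtain ⟨j, hjlt, hjP⟩ := List.mem_iff_getElem.mp (hov1 e1 he1).1
  obtain ⟨k, hklt, hkQ⟩ := List.mem_iff_getElem.mp (hov1 e1 he1).2
  obtain ⟨l, hllt, hlQ⟩ := List.mem_iff_getElem.mp (hov2 e2 he2).2
  have hij : i < j := h1.2 S2 h2.1 (Ne.symm hne) e2 he2 e1 he1 i j
    (by rw [List.getElem?_eq_getElem hilt, hiP]) (by rw [List.getElem?_eq_getElem hjlt, hjP])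
  have hkl : k < l := h2.2 S1 h1.1 hne e1 he1 e2 he2 k l
    (by rw [List.getElem?_eq_getElem hklt, hkQ]) (by rw [List.getElem?_eq_getElem hllt, hlQ])
  obtain ⟨C, hCne, hCchain, hChead, hClast⟩ := G.seg_aux hP.2.1 hij hjlt
  obtain ⟨D, hDne, hDchain, hDhead, hDlast⟩ := G.seg_aux hQ.2.1 hkl hllt
  rw [hiP] at hChead
  rw [hjP] at hClast
  rw [hkQ] at hDhead
  rw [hlQ] at hDlast
  obtain ⟨c, hc, hct⟩ := Option.map_eq_some_iff.mp hChead
  obtain ⟨c', hc', hch⟩ := Option.map_eq_some_iff.mp hClast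
  obtain ⟨d, hd, hdt⟩ := Option.map_eq_some_iff.mp hDhead
  obtain ⟨d', hd', hdh⟩ := Option.map_eq_some_iff.mp hDlast
  have hchain : G.Chain (C ++ D) := by
    rw [Multigraph.Chain, List.Chain', List.isChain_append]
    refine ⟨hCchain, hDchain, fun x hx y hy => ?_⟩
    rw [Option.mem_def, hc'] at hx
    rw [Option.mem_def, hd] at hy
    cases hx; cases hy
    rw [hch, hdt]
  refine hG (C ++ D) (by simp [hCne]) hchain ?_
  rw [List.getLast?_append, hd', List.head?_append, hc]
  simp [hdh, hct]
end
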